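/- If K is a positive integer with R*_K = R*_{K+1}, then R*_{K+Q} = R*_K for every positive integer Q; moreover, under the same hypothesis, for every matrix M* ∈ 𝓗_K with rank(M*) = R*_K, every column of D^K H lies in the column space of M*, i.e., rank[D^K H | M*] = rank(M*). -/

import Mathlib

open Matrix

/-- `h` is `s`-sparse: at most `s` nonzero entries. -/
def IsSparse {L : ℕ} (s : ℕ) (h : Fin L → ℝ) : Prop :=
  {i : Fin L | h i ≠ 0}.ncard ≤ s

/-- Inputs `h 0, …, h (K-1)` steer the state `xinit` to `xfinal`:
`xfinal − D^K xinit = ∑_{k=1}^{K} D^{K−k} H h_k`. -/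
def Steers {N L : ℕ} (D : Matrix (Fin N) (Fin N) ℝ) (H : Matrix (Fin N) (Fin L) ℝ)
    (K : ℕ) (h : Fin K → Fin L → ℝ) (xinit xfinal : Fin N → ℝ) : Prop :=
  xfinal - (D ^ K) *ᵥ xinit = ∑ k : Fin K, (D ^ (K - 1 - (k : ℕ))) *ᵥ (H *ᵥ h k)

/-- The system `(D, H)` is `s`-sparse-controllable. -/
def SparseControllable (N L s : ℕ) (D : Matrix (Fin N) (Fin N) ℝ)
    (H : Matrix (Fin N) (Fin L) ℝ) : Prop :=
  ∀ xinit xfinal : Fin N → ℝ, ∃ K : ℕ, 0 < K ∧ ∃ h : Fin K → Fin L → ℝ,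
    (∀ k, IsSparse s (h k)) ∧ Steers D H K h xinit xfinal

/-- The family `𝓗_K` of `N × (Ks)` matrices
`[D^{K−1}H_{S_1} | D^{K−2}H_{S_2} | … | H_{S_K}]`, where each index set `S_i ⊆ {1,…,L}`
has cardinality `s`.  Each such matrix is encoded with columns indexed by
`Fin K × Fin s`, the set `S_k` being given by an injective enumeration
`f k : Fin s → Fin L` of its elements. -/
def KalmanFamily (N L s : ℕ) (D : Matrix (Fin N) (Fin N) ℝ)
    (H : Matrix (Fin N) (Fin L) ℝ) (K : ℕ) : Set (Matrix (Fin N) (Fin K × Fin s) ℝ) :=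
  {M | ∃ f : Fin K → Fin s → Fin L, (∀ k, Function.Injective (f k)) ∧
    M = Matrix.of fun (i : Fin N) (p : Fin K × Fin s) =>
      ((D ^ (K - 1 - (p.1 : ℕ))) * H) i (f p.1 p.2)}

/-- `R*_K`: the maximum rank over the family `𝓗_K`. -/
noncomputable def maxKalmanRank (N L s : ℕ) (D : Matrix (Fin N) (Fin N) ℝ)
    (H : Matrix (Fin N) (Fin L) ℝ) (K : ℕ) : ℕ :=
  sSup (Matrix.rank '' KalmanFamily N L s D H K)

namespace MaxRankSat

open Submodule Module Set Function

variable {N L s : ℕ}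

/-- the `(k,j)` column at level `m` : `D^(m-1-k) H` column `j`. -/
noncomputable def kcol (D : Matrix (Fin N) (Fin N) ℝ) (H : Matrix (Fin N) (Fin L) ℝ)
    (m k : ℕ) (j : Fin L) : Fin N → ℝ :=
  fun i => (D ^ (m - 1 - k) * H) i j

/-- span of the columns selected by `σ` at level `m`. -/
noncomputable def ksp (D : Matrix (Fin N) (Fin N) ℝ) (H : Matrix (Fin N) (Fin L) ℝ)
    {m : ℕ} (σ : Fin m → Fin s → Fin L) : Submodule ℝ (Fin N → ℝ) :=
  Submodule.span ℝ (Set.range fun p : Fin m × Fin s => kcol D H m p.1 (σ p.1 p.2))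

noncomputable def matOf (D : Matrix (Fin N) (Fin N) ℝ) (H : Matrix (Fin N) (Fin L) ℝ)
    {m : ℕ} (σ : Fin m → Fin s → Fin L) : Matrix (Fin N) (Fin m × Fin s) ℝ :=
  Matrix.of fun i p => (D ^ (m - 1 - (p.1 : ℕ)) * H) i (σ p.1 p.2)

variable {D : Matrix (Fin N) (Fin N) ℝ} {H : Matrix (Fin N) (Fin L) ℝ}

lemma matOf_mem {m : ℕ} {σ : Fin m → Fin s → Fin L} (hσ : ∀ k, Function.Injective (σ k)) :
    matOf D H σ ∈ KalmanFamily N L s D H m :=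
  ⟨σ, hσ, rfl⟩

lemma rank_matOf {m : ℕ} (σ : Fin m → Fin s → Fin L) :
    (matOf D H σ).rank = Module.finrank ℝ (ksp D H σ) := by
  rw [Matrix.rank, Matrix.range_mulVecLin]
  rfl

lemma col_mem_ksp {m : ℕ} (σ : Fin m → Fin s → Fin L) (p : Fin m × Fin s) :
    kcol D H m p.1 (σ p.1 p.2) ∈ ksp D H σ :=
  Submodule.subset_span ⟨p, rfl⟩

lemma ksp_le_iff {m : ℕ} (σ : Fin m → Fin s → Fin L) (W : Submodule ℝ (Fin N → ℝ)) :
    ksp D H σ ≤ W ↔ ∀ p : Fin m × Fin s, kcol D H m p.1 (σ p.1 p.2) ∈ W := by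
  rw [ksp, Submodule.span_le]
  constructor
  · exact fun h p => h ⟨p, rfl⟩
  · rintro h _ ⟨p, rfl⟩; exact h p

lemma bddAbove_ranks (m : ℕ) : BddAbove (Matrix.rank '' KalmanFamily N L s D H m) := by
  refine ⟨N, ?_⟩
  rintro x ⟨M, _, rfl⟩
  exact M.rank_le_card_height.trans_eq (Fintype.card_fin N)

lemma finrank_le_Rk {m : ℕ} {σ : Fin m → Fin s → Fin L} (hσ : ∀ k, Function.Injective (σ k)) :
    Module.finrank ℝ (ksp D H σ) ≤ maxKalmanRank N L s D H m := by
  rw [← rank_matOf]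
  exact le_csSup (bddAbove_ranks m) ⟨matOf D H σ, matOf_mem hσ, rfl⟩

lemma exists_max_sel (hsL : s ≤ L) (m : ℕ) :
    ∃ σ : Fin m → Fin s → Fin L, (∀ k, Function.Injective (σ k)) ∧
      Module.finrank ℝ (ksp D H σ) = maxKalmanRank N L s D H m := by
  have hne : (Matrix.rank '' KalmanFamily N L s D H m).Nonempty := by
    refine ⟨(matOf D H (fun _ : Fin m => Fin.castLE hsL)).rank,
      matOf D H _, matOf_mem (fun _ => Fin.castLE_injective hsL), rfl⟩
  have := Nat.sSup_mem hne (bddAbove_ranks m)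
  obtain ⟨M, ⟨σ, hσ, rfl⟩, hr⟩ := this
  exact ⟨σ, hσ, by rw [← rank_matOf]; exact hr⟩


-- ===== main development =====


def sharedCount {m : ℕ} (σ τ : Fin m → Fin s → Fin L) : ℕ :=
  ∑ k : Fin m, ((Finset.image (σ k) Finset.univ) ∩ (Finset.image (τ k) Finset.univ)).card

lemma sharedCount_le {m : ℕ} (σ τ : Fin m → Fin s → Fin L)
    (hτ : ∀ k, Function.Injective (τ k)) : sharedCount σ τ ≤ m * s := by
  have : ∀ k : Fin m,
      ((Finset.image (σ k) Finset.univ) ∩ (Finset.image (τ k) Finset.univ)).card ≤ s := by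
    intro k
    calc ((Finset.image (σ k) Finset.univ) ∩ (Finset.image (τ k) Finset.univ)).card
        ≤ (Finset.image (τ k) Finset.univ).card :=
          Finset.card_le_card Finset.inter_subset_right
      _ = s := by rw [Finset.card_image_of_injective _ (hτ k), Finset.card_univ, Fintype.card_fin]
  calc sharedCount σ τ ≤ ∑ _k : Fin m, s := Finset.sum_le_sum fun k _ => this k
    _ = m * s := by simp [Finset.sum_const, Finset.card_univ, mul_comm]

lemma finrank_span_singleton_le' (x : Fin N → ℝ) :
    Module.finrank ℝ (Submodule.span ℝ {x}) ≤ 1 := by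
  by_cases hx : x = 0
  · rw [hx, Submodule.span_zero_singleton]
    simp
  · rw [finrank_span_singleton hx]


lemma swap_step {m : ℕ} {σ τ : Fin m → Fin s → Fin L}
    (hσ : ∀ k, Function.Injective (σ k)) (hτ : ∀ k, Function.Injective (τ k))
    {k : Fin m} {a i₀ : Fin s}
    (hv : kcol D H m k (σ k a) ∉ ksp D H τ)
    (hu : τ k i₀ ∉ Set.range (σ k)) :
    ∃ τ' : Fin m → Fin s → Fin L, (∀ k', Function.Injective (τ' k')) ∧
      Module.finrank ℝ (ksp D H τ) ≤ Module.finrank ℝ (ksp D H τ') ∧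
      ksp D H σ ⊔ ksp D H τ' ≤ ksp D H σ ⊔ ksp D H τ ∧
      sharedCount σ τ < sharedCount σ τ' := by
  classical
  set j := σ k a with hj
  have hjτ : j ∉ Set.range (τ k) := by
    rintro ⟨b, hb⟩
    have h := col_mem_ksp (D := D) (H := H) τ (k, b)
    simp only at h
    rw [hb] at h
    exact hv h
  set τ' : Fin m → Fin s → Fin L := Function.update τ k (Function.update (τ k) i₀ j) with hτ'
  have hτ'k : τ' k = Function.update (τ k) i₀ j := by
    rw [hτ']; exact Function.update_self _ _ _
  have hτ'ne : ∀ k' ≠ k, τ' k' = τ k' := by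
    intro k' hk'; rw [hτ']; exact Function.update_of_ne hk' _ _
  have hinj : ∀ k', Function.Injective (τ' k') := by
    intro k'
    by_cases hk' : k' = k
    · rw [hk', hτ'k]
      intro x y hxy
      by_cases hx : x = i₀ <;> by_cases hy : y = i₀
      · rw [hx, hy]
      · rw [hx, Function.update_self, Function.update_of_ne hy] at hxy
        exact absurd ⟨y, hxy.symm⟩ hjτ
      · rw [hy, Function.update_self, Function.update_of_ne hx] at hxy
        exact absurd ⟨x, hxy⟩ hjτ
      · rw [Function.update_of_ne hx, Function.update_of_ne hy] at hxy
        exact hτ k hxy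
    · rw [hτ'ne k' hk']; exact hτ k'
  have hcols : ∀ p : Fin m × Fin s, p ≠ (k, i₀) → τ' p.1 p.2 = τ p.1 p.2 := by
    rintro ⟨k', b⟩ hp
    by_cases hk' : k' = k
    · subst hk'
      have hb : b ≠ i₀ := by rintro rfl; exact hp rfl
      rw [hτ'k]
      exact Function.update_of_ne hb _ _
    · rw [hτ'ne k' hk']
  have hτ'q : τ' (k, i₀).1 (k, i₀).2 = j := by rw [hτ'k]; exact Function.update_self _ _ _
  set v := kcol D H m (k : ℕ) j with hvdef
  set Rest : Submodule ℝ (Fin N → ℝ) := Submodule.span ℝ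
    (Set.range fun p : {p : Fin m × Fin s // p ≠ (k, i₀)} => kcol D H m p.1.1 (τ p.1.1 p.1.2))
    with hRest
  have hRest_le : Rest ≤ ksp D H τ := by
    rw [hRest, Submodule.span_le]; rintro _ ⟨p, rfl⟩; exact col_mem_ksp τ p.1
  have hsupτ : ksp D H τ = Rest ⊔ Submodule.span ℝ {kcol D H m k (τ k i₀)} := by
    refine le_antisymm ?_ (sup_le hRest_le ?_)
    · rw [ksp_le_iff]
      intro p
      by_cases hp : p = (k, i₀)
      · subst hp
        exact Submodule.mem_sup_right (Submodule.subset_span rfl)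
      · exact Submodule.mem_sup_left (Submodule.subset_span ⟨⟨p, hp⟩, rfl⟩)
    · rw [Submodule.span_le]
      rintro _ rfl
      exact col_mem_ksp τ (k, i₀)
  have hsupτ' : ksp D H τ' = Rest ⊔ Submodule.span ℝ {v} := by
    refine le_antisymm ?_ (sup_le ?_ ?_)
    · rw [ksp_le_iff]
      intro p
      by_cases hp : p = (k, i₀)
      · subst hp
        rw [hτ'q]
        exact Submodule.mem_sup_right (Submodule.subset_span rfl)
      · rw [hcols p hp]
        exact Submodule.mem_sup_left (Submodule.subset_span ⟨⟨p, hp⟩, rfl⟩)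
    · rw [hRest, Submodule.span_le]
      rintro _ ⟨p, rfl⟩
      have h := col_mem_ksp (D := D) (H := H) τ' p.1
      rw [hcols p.1 p.2] at h
      exact h
    · rw [Submodule.span_le]
      rintro _ rfl
      have h := col_mem_ksp (D := D) (H := H) τ' (k, i₀)
      rw [hτ'q] at h
      exact h
  have hvR : v ∉ Rest := fun h => hv (hRest_le h)
  have hlt : Rest < Rest ⊔ Submodule.span ℝ {v} :=
    lt_of_le_of_ne le_sup_left (fun h => hvR
      (h.symm ▸ Submodule.mem_sup_right (Submodule.subset_span rfl)))
  have h1 : Module.finrank ℝ Rest < Module.finrank ℝ (ksp D H τ') := by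
    rw [hsupτ']
    exact Submodule.finrank_lt_finrank_of_lt hlt
  have h2 : Module.finrank ℝ (ksp D H τ) ≤ Module.finrank ℝ Rest + 1 := by
    rw [hsupτ]
    refine (Submodule.finrank_add_le_finrank_add_finrank _ _).trans ?_
    exact Nat.add_le_add_left (finrank_span_singleton_le' _) _
  -- the shared count computation at block k
  have himg : Finset.image (τ' k) Finset.univ
      = insert j ((Finset.image (τ k) Finset.univ).erase (τ k i₀)) := by
    rw [hτ'k]
    calc Finset.image (Function.update (τ k) i₀ j) Finset.univ
        = Finset.image (Function.update (τ k) i₀ j) (insert i₀ (Finset.univ.erase i₀)) := by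
          rw [Finset.insert_erase (Finset.mem_univ i₀)]
      _ = insert j (Finset.image (Function.update (τ k) i₀ j) (Finset.univ.erase i₀)) := by
          rw [Finset.image_insert, Function.update_self]
      _ = insert j (Finset.image (τ k) (Finset.univ.erase i₀)) := by
          refine congrArg _ (Finset.image_congr ?_)
          intro x hx
          exact Function.update_of_ne (Finset.ne_of_mem_erase hx) _ _
      _ = insert j ((Finset.image (τ k) Finset.univ).erase (τ k i₀)) := by
          rw [Finset.image_erase (hτ k)]
  have hjS : j ∈ Finset.image (σ k) Finset.univ :=
    Finset.mem_image.2 ⟨a, Finset.mem_univ a, rfl⟩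
  have hjT : j ∉ Finset.image (τ k) Finset.univ := by
    intro hmem
    obtain ⟨b, _, hb⟩ := Finset.mem_image.1 hmem
    exact hjτ ⟨b, hb⟩
  have huS : τ k i₀ ∉ Finset.image (σ k) Finset.univ := by
    intro hmem
    obtain ⟨b, _, hb⟩ := Finset.mem_image.1 hmem
    exact hu ⟨b, hb⟩
  have key : ((Finset.image (σ k) Finset.univ) ∩ (Finset.image (τ' k) Finset.univ)).card
      = ((Finset.image (σ k) Finset.univ) ∩ (Finset.image (τ k) Finset.univ)).card + 1 := by
    rw [himg]
    have hseteq : (Finset.image (σ k) Finset.univ)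
          ∩ insert j ((Finset.image (τ k) Finset.univ).erase (τ k i₀))
        = insert j ((Finset.image (σ k) Finset.univ) ∩ (Finset.image (τ k) Finset.univ)) := by
      ext x
      simp only [Finset.mem_inter, Finset.mem_insert, Finset.mem_erase]
      constructor
      · rintro ⟨hxσ, hx | ⟨hxu, hxτ⟩⟩
        · exact Or.inl hx
        · exact Or.inr ⟨hxσ, hxτ⟩
      · rintro (rfl | ⟨hxσ, hxτ⟩)
        · exact ⟨hjS, Or.inl rfl⟩
        · refine ⟨hxσ, Or.inr ⟨?_, hxτ⟩⟩
          rintro rfl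
          exact huS hxσ
    rw [hseteq, Finset.card_insert_of_notMem (fun hmem => hjT (Finset.mem_inter.1 hmem).2)]
  refine ⟨τ', hinj, by omega, ?_, ?_⟩
  · refine sup_le le_sup_left ?_
    rw [hsupτ']
    refine sup_le (hRest_le.trans le_sup_right) ?_
    rw [Submodule.span_le]
    rintro _ rfl
    exact Submodule.mem_sup_left (col_mem_ksp σ (k, a))
  · rw [sharedCount, sharedCount]
    refine Finset.sum_lt_sum (fun k' _ => ?_) ⟨k, Finset.mem_univ k, by rw [key]; omega⟩
    by_cases hk' : k' = k
    · rw [hk', key]; omega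
    · rw [hτ'ne k' hk']

lemma exists_dominating (hsL : s ≤ L) {m : ℕ} (σ : Fin m → Fin s → Fin L)
    (hσ : ∀ k, Function.Injective (σ k)) :
    ∃ τ : Fin m → Fin s → Fin L, (∀ k, Function.Injective (τ k)) ∧
      Module.finrank ℝ (ksp D H τ) = maxKalmanRank N L s D H m ∧
      ksp D H σ ≤ ksp D H τ := by
  classical
  set c := m * s with hc
  set R := maxKalmanRank N L s D H m with hR
  set μ : (Fin m → Fin s → Fin L) → ℕ := fun τ =>
    (c + 1) * Module.finrank ℝ ↥(ksp D H σ ⊔ ksp D H τ) + (c - sharedCount σ τ) with hμ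
  set T : Set ℕ := {t | ∃ τ : Fin m → Fin s → Fin L, (∀ k, Function.Injective (τ k)) ∧
      Module.finrank ℝ (ksp D H τ) = R ∧ μ τ = t} with hT
  have hTne : T.Nonempty := by
    obtain ⟨τ, hτ, hrk⟩ := exists_max_sel (D := D) (H := H) hsL m
    exact ⟨μ τ, τ, hτ, hrk, rfl⟩
  obtain ⟨τ, hτ, hrk, hμτ⟩ := Nat.sInf_mem hTne
  refine ⟨τ, hτ, hrk, ?_⟩
  by_contra hns
  have hexv : ∃ p : Fin m × Fin s, kcol D H m p.1 (σ p.1 p.2) ∉ ksp D H τ := by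
    by_contra hall
    push_neg at hall
    exact hns ((ksp_le_iff σ _).2 hall)
  obtain ⟨⟨k, a⟩, hv⟩ := hexv
  have hex : ∃ i₀ : Fin s, τ k i₀ ∉ Set.range (σ k) := by
    by_contra hall
    push_neg at hall
    have hsub : Finset.image (τ k) Finset.univ ⊆ Finset.image (σ k) Finset.univ := by
      intro x hx
      obtain ⟨b, _, hb⟩ := Finset.mem_image.1 hx
      obtain ⟨cc, hcc⟩ := hall b
      exact Finset.mem_image.2 ⟨cc, Finset.mem_univ cc, by rw [hcc, hb]⟩
    have hcard : (Finset.image (σ k) Finset.univ).card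
        ≤ (Finset.image (τ k) Finset.univ).card := by
      rw [Finset.card_image_of_injective _ (hσ k), Finset.card_image_of_injective _ (hτ k)]
    have heq := Finset.eq_of_subset_of_card_le hsub hcard
    have hmem : σ k a ∈ Finset.image (τ k) Finset.univ := by
      rw [heq]; exact Finset.mem_image.2 ⟨a, Finset.mem_univ a, rfl⟩
    obtain ⟨b, _, hb⟩ := Finset.mem_image.1 hmem
    have h := col_mem_ksp (D := D) (H := H) τ (k, b)
    simp only at h
    rw [hb] at h
    exact hv h
  obtain ⟨i₀, hu⟩ := hex
  obtain ⟨τ', hinj', hfr, hsup, hsh⟩ := swap_step hσ hτ hv hu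
  have hrk' : Module.finrank ℝ (ksp D H τ') = R :=
    le_antisymm (finrank_le_Rk hinj') (by rw [← hrk]; exact hfr)
  have hf' : Module.finrank ℝ ↥(ksp D H σ ⊔ ksp D H τ')
      ≤ Module.finrank ℝ ↥(ksp D H σ ⊔ ksp D H τ) := Submodule.finrank_mono hsup
  have hshle : sharedCount σ τ' ≤ c := by rw [hc]; exact sharedCount_le σ τ' hinj'
  have hμlt : μ τ' < μ τ := by
    rw [hμ]
    simp only
    rcases lt_or_eq_of_le hf' with hlt | heqf
    · calc (c + 1) * Module.finrank ℝ ↥(ksp D H σ ⊔ ksp D H τ') + (c - sharedCount σ τ')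
          < (c + 1) * Module.finrank ℝ ↥(ksp D H σ ⊔ ksp D H τ') + (c + 1) := by omega
        _ = (c + 1) * (Module.finrank ℝ ↥(ksp D H σ ⊔ ksp D H τ') + 1) := by ring
        _ ≤ (c + 1) * Module.finrank ℝ ↥(ksp D H σ ⊔ ksp D H τ) :=
            Nat.mul_le_mul_left _ hlt
        _ ≤ _ := Nat.le_add_right _ _
    · rw [heqf]
      have h2 : c - sharedCount σ τ' < c - sharedCount σ τ := by omega
      omega
  have hmemT : μ τ' ∈ T := ⟨τ', hinj', hrk', rfl⟩
  have := Nat.sInf_le hmemT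
  omega

lemma kcol_succ (m k : ℕ) (j : Fin L) : kcol D H (m + 1) (k + 1) j = kcol D H m k j := by
  unfold kcol
  have h : m + 1 - 1 - (k + 1) = m - 1 - k := by omega
  rw [h]

lemma kcol_last (m : ℕ) (j : Fin L) : kcol D H (m + 1) m j = fun i => H i j := by
  unfold kcol
  have h : m + 1 - 1 - m = 0 := by omega
  rw [h, pow_zero, Matrix.one_mul]

lemma kcol_zero' (m : ℕ) (j : Fin L) :
    kcol D H (m + 1) 0 j = fun i => (D ^ m * H) i j := by
  unfold kcol
  have h : m + 1 - 1 - 0 = m := by omega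
  rw [h]

lemma kcol_step {m k : ℕ} (hk : k < m) (j : Fin L) :
    kcol D H (m + 1) k j = D *ᵥ kcol D H m k j := by
  funext i
  show (D ^ (m + 1 - 1 - k) * H) i j = (D *ᵥ fun r => (D ^ (m - 1 - k) * H) r j) i
  have h1 : m + 1 - 1 - k = (m - 1 - k) + 1 := by omega
  rw [h1, pow_succ', Matrix.mul_assoc, Matrix.mul_apply]
  rfl

lemma map_ksp_le {m : ℕ} (σ : Fin m → Fin s → Fin L) (W : Submodule ℝ (Fin N → ℝ))
    (h : ∀ p : Fin m × Fin s, D *ᵥ kcol D H m p.1 (σ p.1 p.2) ∈ W) :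
    Submodule.map (Matrix.mulVecLin D) (ksp D H σ) ≤ W := by
  rw [ksp, Submodule.map_span, Submodule.span_le]
  rintro _ ⟨_, ⟨p, rfl⟩, rfl⟩
  rw [Matrix.mulVecLin_apply]
  exact h p

/-- appending one block in front (at the highest power) can only keep or grow the rank. -/
lemma ksp_le_cases {m : ℕ} (σ : Fin m → Fin s → Fin L) (g : Fin s → Fin L) :
    ksp D H σ ≤ ksp D H (fun k : Fin (m + 1) =>
      Fin.cases (motive := fun _ => Fin s → Fin L) g σ k) := by
  rw [ksp_le_iff]
  rintro ⟨k, i⟩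
  have h1 : kcol D H m k (σ k i) = kcol D H (m + 1) ((k.succ : Fin (m + 1)) : ℕ)
      ((fun k' : Fin (m + 1) => Fin.cases (motive := fun _ => Fin s → Fin L) g σ k') k.succ i) := by
    simp only [Fin.cases_succ, Fin.val_succ, kcol_succ]
  rw [h1]
  exact col_mem_ksp _ (k.succ, i)

lemma inj_cases {m : ℕ} {σ : Fin m → Fin s → Fin L} {g : Fin s → Fin L}
    (hσ : ∀ k, Function.Injective (σ k)) (hg : Function.Injective g) :
    ∀ k : Fin (m + 1), Function.Injective
      ((fun k' : Fin (m + 1) => Fin.cases (motive := fun _ => Fin s → Fin L) g σ k') k) := by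
  intro k
  induction k using Fin.cases with
  | zero => simpa using hg
  | succ k' => simpa using hσ k'

lemma Rk_le_succ (hsL : s ≤ L) (m : ℕ) :
    maxKalmanRank N L s D H m ≤ maxKalmanRank N L s D H (m + 1) := by
  obtain ⟨σ, hσ, hmax⟩ := exists_max_sel (D := D) (H := H) hsL m
  rw [← hmax]
  refine le_trans (Submodule.finrank_mono (ksp_le_cases σ (Fin.castLE hsL))) ?_
  exact finrank_le_Rk (inj_cases hσ (Fin.castLE_injective hsL))

lemma Rk_le_add (hsL : s ≤ L) (m q : ℕ) :
    maxKalmanRank N L s D H m ≤ maxKalmanRank N L s D H (m + q) := by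
  induction q with
  | zero => exact le_refl _
  | succ q ih => exact ih.trans (Rk_le_succ hsL (m + q))

/-- claim 2: if the max rank does not grow from level `m` to `m+1`, then every column of
`D^m H` lies in the span of any max-rank selection at level `m`. -/
lemma topcol_mem (hs : 0 < s) (hsL : s ≤ L) {m : ℕ}
    (hR : maxKalmanRank N L s D H (m + 1) ≤ maxKalmanRank N L s D H m)
    {σ : Fin m → Fin s → Fin L} (hσ : ∀ k, Function.Injective (σ k))
    (hmax : Module.finrank ℝ (ksp D H σ) = maxKalmanRank N L s D H m) (j : Fin L) :
    (fun i => (D ^ m * H) i j) ∈ ksp D H σ := by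
  set x : Fin L := Fin.castLE hsL ⟨0, hs⟩ with hx
  set g : Fin s → Fin L := fun i => (Equiv.swap x j) (Fin.castLE hsL i) with hg
  have hginj : Function.Injective g :=
    (Equiv.injective _).comp (Fin.castLE_injective hsL)
  have hg0 : g ⟨0, hs⟩ = j := by
    simp only [hg]
    rw [← hx, Equiv.swap_apply_left]
  set τ : Fin (m + 1) → Fin s → Fin L :=
    fun k => Fin.cases (motive := fun _ => Fin s → Fin L) g σ k with hτ
  have hle : ksp D H σ ≤ ksp D H τ := ksp_le_cases σ g
  have hinjτ := inj_cases hσ hginj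
  have hfr : Module.finrank ℝ (ksp D H τ) ≤ Module.finrank ℝ (ksp D H σ) := by
    rw [hmax]
    exact le_trans (finrank_le_Rk hinjτ) hR
  have heq : ksp D H σ = ksp D H τ := Submodule.eq_of_le_of_finrank_le hle hfr
  have hcol := col_mem_ksp (D := D) (H := H) τ ((0 : Fin (m + 1)), ⟨0, hs⟩)
  have hτ0 : τ (0 : Fin (m + 1)) ⟨0, hs⟩ = j := by rw [hτ]; simpa using hg0
  rw [hτ0] at hcol
  have hval : (((0 : Fin (m + 1)) : ℕ)) = 0 := rfl
  rw [hval, kcol_zero'] at hcol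
  rw [heq]
  exact hcol

/-- peeling one factor of `D`: a selection at level `m+1` is dominated by the `D`-shift of
anything dominating its first `m` blocks, plus its last block. -/
lemma ksp_peel {m K' : ℕ} (σ : Fin (m + 1) → Fin s → Fin L) (τ₀ : Fin K' → Fin s → Fin L)
    (hW : ksp D H (fun k : Fin m => σ k.castSucc) ≤ ksp D H τ₀) :
    ksp D H σ ≤ ksp D H (fun k : Fin (K' + 1) =>
      Fin.lastCases (motive := fun _ => Fin s → Fin L) (σ (Fin.last m)) τ₀ k) := by
  classical
  set τup : Fin (K' + 1) → Fin s → Fin L :=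
    fun k => Fin.lastCases (motive := fun _ => Fin s → Fin L) (σ (Fin.last m)) τ₀ k with hτup
  have hmap : Submodule.map (Matrix.mulVecLin D) (ksp D H τ₀) ≤ ksp D H τup := by
    refine map_ksp_le τ₀ _ ?_
    rintro ⟨kq, iq⟩
    have h1 : D *ᵥ kcol D H K' kq (τ₀ kq iq) = kcol D H (K' + 1) kq (τ₀ kq iq) :=
      (kcol_step kq.isLt _).symm
    have h2 : τ₀ kq = τup kq.castSucc := by rw [hτup]; simp
    rw [h1, h2]
    have h3 : ((kq : ℕ)) = ((kq.castSucc : Fin (K' + 1)) : ℕ) := rfl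
    rw [h3]
    exact col_mem_ksp τup (kq.castSucc, iq)
  rw [ksp_le_iff]
  rintro ⟨k, i⟩
  induction k using Fin.lastCases with
  | last =>
      have h1 : ((Fin.last m : Fin (m + 1)) : ℕ) = m := rfl
      rw [h1, kcol_last]
      have h2 : σ (Fin.last m) i = τup (Fin.last K') i := by rw [hτup]; simp
      rw [h2]
      have h3 := col_mem_ksp (D := D) (H := H) τup (Fin.last K', i)
      have h4 : ((Fin.last K' : Fin (K' + 1)) : ℕ) = K' := rfl
      rw [h4, kcol_last] at h3
      exact h3
  | cast k' =>
      have h1 : ((k'.castSucc : Fin (m + 1)) : ℕ) = (k' : ℕ) := rfl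
      rw [h1, kcol_step k'.isLt]
      have hcm : kcol D H m k' (σ k'.castSucc i) ∈ ksp D H τ₀ :=
        hW (col_mem_ksp (fun k : Fin m => σ k.castSucc) (k', i))
      have hmm : Matrix.mulVecLin D (kcol D H m k' (σ k'.castSucc i)) ∈
          Submodule.map (Matrix.mulVecLin D) (ksp D H τ₀) := Submodule.mem_map_of_mem hcm
      rw [Matrix.mulVecLin_apply] at hmm
      exact hmap hmm

lemma master (hs : 0 < s) (hsL : s ≤ L) (K : ℕ)
    (hsat : maxKalmanRank N L s D H K = maxKalmanRank N L s D H (K + 1)) :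
    ∀ p : ℕ,
      (maxKalmanRank N L s D H (K + p + 1) = maxKalmanRank N L s D H K) ∧
      (∀ σ₀ : Fin K → Fin s → Fin L, (∀ k, Function.Injective (σ₀ k)) →
        Module.finrank ℝ (ksp D H σ₀) = maxKalmanRank N L s D H K →
        ∀ j, (fun i => (D ^ (K + p) * H) i j) ∈ ksp D H σ₀) ∧
      (∀ σ : Fin (K + p) → Fin s → Fin L, (∀ k, Function.Injective (σ k)) →
        Module.finrank ℝ (ksp D H σ) = maxKalmanRank N L s D H (K + p) →
        ∃ σ₀ : Fin K → Fin s → Fin L, (∀ k, Function.Injective (σ₀ k)) ∧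
          Module.finrank ℝ (ksp D H σ₀) = maxKalmanRank N L s D H K ∧
          ksp D H σ = ksp D H σ₀) := by
  intro p
  induction p using Nat.strong_induction_on with
  | _ p IH =>
  match p with
  | 0 =>
      refine ⟨hsat.symm, ?_, ?_⟩
      · intro σ₀ hσ₀ hmax j
        exact topcol_mem hs hsL (le_of_eq hsat.symm) hσ₀ hmax j
      · intro σ hσ hmax
        exact ⟨σ, hσ, hmax, rfl⟩
  | q + 1 =>
      obtain ⟨REqq, Qq, Descq⟩ := IH q (Nat.lt_succ_self q)
      -- Desc at q+1
      have Desc' : ∀ σ : Fin (K + q + 1) → Fin s → Fin L, (∀ k, Function.Injective (σ k)) →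
          Module.finrank ℝ (ksp D H σ) = maxKalmanRank N L s D H (K + q + 1) →
          ∃ σ₀ : Fin K → Fin s → Fin L, (∀ k, Function.Injective (σ₀ k)) ∧
            Module.finrank ℝ (ksp D H σ₀) = maxKalmanRank N L s D H K ∧
            ksp D H σ = ksp D H σ₀ := by
        intro σ hσ hmax
        set T : Fin (K + q) → Fin s → Fin L := fun k => σ k.succ with hTdef
        have hTinj : ∀ k, Function.Injective (T k) := fun k => hσ k.succ
        obtain ⟨T', hT'inj, hT'max, hTle⟩ := exists_dominating hsL T hTinj
        obtain ⟨σ₀, hσ₀inj, hσ₀max, hT'eq⟩ := Descq T' hT'inj hT'max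
        have hle : ksp D H σ ≤ ksp D H σ₀ := by
          rw [ksp_le_iff]
          rintro ⟨k, i⟩
          induction k using Fin.cases with
          | zero =>
              have h0 : (((0 : Fin (K + q + 1)) : ℕ)) = 0 := rfl
              rw [h0, kcol_zero']
              exact Qq σ₀ hσ₀inj hσ₀max (σ 0 i)
          | succ k' =>
              have h1 : ((k'.succ : Fin (K + q + 1)) : ℕ) = (k' : ℕ) + 1 := rfl
              rw [h1, kcol_succ]
              have h2 : kcol D H (K + q) k' (σ k'.succ i) ∈ ksp D H T :=
                col_mem_ksp T (k', i)
              exact (hT'eq ▸ (hTle h2) : _)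
        refine ⟨σ₀, hσ₀inj, hσ₀max, Submodule.eq_of_le_of_finrank_le hle ?_⟩
        rw [hσ₀max, hmax, REqq]
      -- rank equality at q+1 (i.e. at level K+q+2)
      have REq' : maxKalmanRank N L s D H (K + q + 1 + 1) = maxKalmanRank N L s D H K := by
        refine le_antisymm ?_ ?_
        · obtain ⟨σ, hσ, hmax⟩ := exists_max_sel (D := D) (H := H) hsL (K + q + 1 + 1)
          set B : Fin (K + q + 1) → Fin s → Fin L := fun k => σ k.castSucc with hBdef
          have hBinj : ∀ k, Function.Injective (B k) := fun k => hσ k.castSucc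
          obtain ⟨B', hB'inj, hB'max, hBle⟩ := exists_dominating hsL B hBinj
          obtain ⟨σ₀, hσ₀inj, hσ₀max, hB'eq⟩ := Desc' B' hB'inj hB'max
          have hW : ksp D H B ≤ ksp D H σ₀ := hBle.trans (le_of_eq hB'eq)
          have hpeel := ksp_peel σ σ₀ hW
          set τup : Fin (K + 1) → Fin s → Fin L :=
            fun k => Fin.lastCases (motive := fun _ => Fin s → Fin L)
              (σ (Fin.last (K + q + 1))) σ₀ k with hτup
          have hτinj : ∀ k, Function.Injective (τup k) := by
            intro k
            induction k using Fin.lastCases with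
            | last => rw [hτup]; simpa using hσ (Fin.last (K + q + 1))
            | cast k' => rw [hτup]; simpa using hσ₀inj k'
          calc maxKalmanRank N L s D H (K + q + 1 + 1) = Module.finrank ℝ (ksp D H σ) :=
                hmax.symm
            _ ≤ Module.finrank ℝ (ksp D H τup) := Submodule.finrank_mono hpeel
            _ ≤ maxKalmanRank N L s D H (K + 1) := finrank_le_Rk hτinj
            _ = maxKalmanRank N L s D H K := hsat.symm
        · exact Rk_le_add hsL K (q + 2)
      refine ⟨REq', ?_, Desc'⟩
      -- column property at q+1
      intro σ₀ hσ₀ hmax j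
      have chain : ∀ t : ℕ, t ≤ q + 1 → ∃ A : Fin (K + t) → Fin s → Fin L,
          (∀ k, Function.Injective (A k)) ∧ ksp D H A = ksp D H σ₀ ∧
          Module.finrank ℝ (ksp D H A) = maxKalmanRank N L s D H (K + t) := by
        intro t
        induction t with
        | zero => exact fun _ => ⟨σ₀, hσ₀, rfl, hmax⟩
        | succ t iht =>
            intro ht
            obtain ⟨A, hAinj, hAeq, hAmax⟩ := iht (by omega)
            have hIH := IH t (by omega)
            set A' : Fin (K + t + 1) → Fin s → Fin L :=
              fun k => Fin.cases (motive := fun _ => Fin s → Fin L)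
                (Fin.castLE hsL) A k with hA'
            have hA'inj : ∀ k, Function.Injective (A' k) :=
              inj_cases hAinj (Fin.castLE_injective hsL)
            have hup : ksp D H A ≤ ksp D H A' := ksp_le_cases A (Fin.castLE hsL)
            have hdown : ksp D H A' ≤ ksp D H σ₀ := by
              rw [ksp_le_iff]
              rintro ⟨k, i⟩
              induction k using Fin.cases with
              | zero =>
                  have h0 : (((0 : Fin (K + t + 1)) : ℕ)) = 0 := rfl
                  rw [h0, kcol_zero']
                  have hA'0 : A' 0 i = Fin.castLE hsL i := by
                    simp only [hA', Fin.cases_zero]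
                  rw [hA'0]
                  exact hIH.2.1 σ₀ hσ₀ hmax (Fin.castLE hsL i)
              | succ k' =>
                  have h1 : ((k'.succ : Fin (K + t + 1)) : ℕ) = (k' : ℕ) + 1 := rfl
                  have hA's : A' k'.succ = A k' := by rw [hA']; simp
                  rw [h1, hA's, kcol_succ]
                  exact hAeq ▸ col_mem_ksp A (k', i)
            have heq : ksp D H A' = ksp D H σ₀ :=
              le_antisymm hdown (hAeq ▸ hup)
            refine ⟨A', hA'inj, heq, ?_⟩
            rw [heq, hmax]
            exact hIH.1.symm
      obtain ⟨A, hAinj, hAeq, hAmax⟩ := chain (q + 1) le_rfl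
      have hR : maxKalmanRank N L s D H (K + (q + 1) + 1)
          ≤ maxKalmanRank N L s D H (K + (q + 1)) := by
        have h1 : maxKalmanRank N L s D H (K + (q + 1) + 1) = maxKalmanRank N L s D H K := REq'
        have h2 : maxKalmanRank N L s D H (K + (q + 1)) = maxKalmanRank N L s D H K := REqq
        rw [h1, h2]
      have := topcol_mem hs hsL hR hAinj hAmax j
      rw [hAeq] at this
      exact this



/-- part 2 in `matOf` form. -/
lemma part2 (hs : 0 < s) (hsL : s ≤ L) (K : ℕ)
    (hsat : maxKalmanRank N L s D H K = maxKalmanRank N L s D H (K + 1))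
    {σ : Fin K → Fin s → Fin L} (hσ : ∀ k, Function.Injective (σ k))
    (hrank : (matOf D H σ).rank = maxKalmanRank N L s D H K) :
    (Matrix.fromCols (D ^ K * H) (matOf D H σ)).rank = (matOf D H σ).rank := by
  have hrk : Module.finrank ℝ (ksp D H σ) = maxKalmanRank N L s D H K := by
    rw [← rank_matOf]; exact hrank
  have Q0 := (master hs hsL K hsat 0).2.1 σ hσ hrk
  have hA : Submodule.span ℝ (Set.range (D ^ K * H)ᵀ) ≤ ksp D H σ := by
    rw [Submodule.span_le]
    rintro _ ⟨j, rfl⟩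
    exact Q0 j
  rw [rank_matOf σ, Matrix.rank, Matrix.range_mulVecLin]
  have hrng : Set.range (Matrix.fromCols (D ^ K * H) (matOf D H σ))ᵀ
      = Set.range (D ^ K * H)ᵀ ∪ Set.range (matOf D H σ)ᵀ := by
    rw [Matrix.transpose_fromCols]
    exact Set.Sum.elim_range _ _
  have hB : Submodule.span ℝ (Set.range (matOf D H σ)ᵀ) = ksp D H σ := rfl
  rw [show Set.range (Matrix.fromCols (D ^ K * H) (matOf D H σ)).col
      = Set.range (Matrix.fromCols (D ^ K * H) (matOf D H σ))ᵀ from rfl]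
  rw [hrng, Submodule.span_union, hB, sup_eq_right.2 hA]

end MaxRankSat

/-- If `R*_K = R*_{K+1}` then `R*_{K+Q} = R*_K` for every positive `Q`; moreover every
maximum-rank `M* ∈ 𝓗_K` already contains the columns of `D^K H` in its column space,
i.e. `rank [D^K H | M*] = rank M*`. -/
theorem max_rank_saturates (N L s : ℕ) (hN : 0 < N) (hL : 0 < L) (hs : 0 < s) (hsL : s ≤ L)
    (D : Matrix (Fin N) (Fin N) ℝ) (H : Matrix (Fin N) (Fin L) ℝ)
    (K : ℕ) (hK : 0 < K)
    (hsat : maxKalmanRank N L s D H K = maxKalmanRank N L s D H (K + 1)) :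
    (∀ Q : ℕ, 0 < Q → maxKalmanRank N L s D H (K + Q) = maxKalmanRank N L s D H K) ∧
    (∀ Mstar ∈ KalmanFamily N L s D H K, Mstar.rank = maxKalmanRank N L s D H K →
      (Matrix.fromCols ((D ^ K) * H) Mstar).rank = Mstar.rank) := by
  constructor
  · intro Q hQ
    have h := (MaxRankSat.master (D := D) (H := H) hs hsL K hsat (Q - 1)).1
    have hidx : K + (Q - 1) + 1 = K + Q := by omega
    rw [hidx] at h
    exact h
  · intro Mstar hmem hrank
    obtain ⟨σ, hσ, rfl⟩ := hmem
    exact MaxRankSat.part2 hs hsL K hsat hσ hrank
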